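/- (Structure of the Zero Set) Let Ω ⊆ ℍ be a symmetric slice domain and f : Ω → ℍ a slice regular function not identically zero. Then the zero set of f consists of isolated points and isolated 2-spheres of the form x + yS with y ≠ 0: every zero q₀ of f either is isolated in the zero set, or lies on a sphere x + yS contained in the zero set which is isolated among the components of the zero set. -/

import Mathlib

noncomputable section

abbrev H := Quaternion ℝ

/-- The sphere of quaternion imaginary units. -/
def Sph : Set H := {q : H | q ^ 2 = -1}

/-- The complex line (Slice) through 1 and `I`. -/
def Slice (I : H) : Set H := {q : H | ∃ x y : ℝ, q = (x : H) + y • I}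

/-- The 2-sphere `x + y𝕊`. -/
def sphSet (x y : ℝ) : Set H := {q : H | ∃ I ∈ Sph, q = (x : H) + y • I}

/-- The real axis inside the quaternions. -/
def realAxis : Set H := {q : H | ∃ r : ℝ, q = (r : H)}

/-- `f` is holomorphic on the `I`-Slice of `Ω`: at every point of `Ω ∩ L_I` the
map `(x,y) ↦ f(x+yI)` is (real) differentiable and satisfies the
Cauchy–Riemann equation `∂f/∂x + I ∂f/∂y = 0`. -/
def HoloSlice (Ω : Set H) (f : H → H) (I : H) : Prop :=
  ∀ x y : ℝ, (x : H) + y • I ∈ Ω →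
    DifferentiableAt ℝ (fun p : ℝ × ℝ => f ((p.1 : H) + p.2 • I)) (x, y) ∧
    fderiv ℝ (fun p : ℝ × ℝ => f ((p.1 : H) + p.2 • I)) (x, y) (1, 0)
      + I * fderiv ℝ (fun p : ℝ × ℝ => f ((p.1 : H) + p.2 • I)) (x, y) (0, 1) = 0

/-- Slice regular functions: every Slice restriction is holomorphic. -/
def SliceRegular (Ω : Set H) (f : H → H) : Prop :=
  ∀ I ∈ Sph, HoloSlice Ω f I

/-- A Slice domain: a domain intersecting the real axis whose slices are domains. -/
def IsSliceDomain (Ω : Set H) : Prop :=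
  IsOpen Ω ∧ IsConnected Ω ∧ (Ω ∩ realAxis).Nonempty ∧
  ∀ I ∈ Sph, IsConnected (Ω ∩ Slice I)

/-- Axially symmetric set. -/
def AxSymm (C : Set H) : Prop :=
  ∀ (x y : ℝ), ∀ I ∈ Sph, (x : H) + y • I ∈ C → ∀ J ∈ Sph, (x : H) + y • J ∈ C

/-- Symmetric Slice domain. -/
def IsSymmSliceDomain (Ω : Set H) : Prop := IsSliceDomain Ω ∧ AxSymm Ω

/-- Orthogonality of quaternions w.r.t. the Euclidean inner product `re (p * star q)`. -/
def Orth (I J : H) : Prop := (I * star J).re = 0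

/-- `F, G` give a splitting `f = F + G J` of `f` on the Slice `Ω ∩ L_I`,
with `F, G` holomorphic and `L_I`-valued. -/
structure IsSplitting (Ω : Set H) (f : H → H) (I J : H) (F G : H → H) : Prop where
  mapsF : ∀ q ∈ Ω ∩ Slice I, F q ∈ Slice I
  mapsG : ∀ q ∈ Ω ∩ Slice I, G q ∈ Slice I
  holoF : HoloSlice Ω F I
  holoG : HoloSlice Ω G I
  eq : ∀ q ∈ Ω ∩ Slice I, f q = F q + G q * J

/-- `h` is the regular product `f * g`: it is Slice regular and restricts on some
Slice `L_I` (with `I ⊥ J`, splittings `f = F + GJ`, `g = F' + G'J`) to the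
product formula.  (Note `star` is quaternionic conjugation, which restricts to
complex conjugation on each Slice.) -/
def IsRegularProduct (Ω : Set H) (f g h : H → H) : Prop :=
  SliceRegular Ω h ∧
  ∃ I ∈ Sph, ∃ J ∈ Sph, Orth I J ∧
    ∃ F G F' G' : H → H, IsSplitting Ω f I J F G ∧ IsSplitting Ω g I J F' G' ∧
      ∀ q ∈ Ω ∩ Slice I,
        h q = (F q * F' q - G q * star (G' (star q)))
            + (F q * G' q + G q * star (F' (star q))) * J

/-- `fc` is the regular conjugate of `f`. -/
def IsRegularConj (Ω : Set H) (f fc : H → H) : Prop :=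
  SliceRegular Ω fc ∧
  ∃ I ∈ Sph, ∃ J ∈ Sph, Orth I J ∧
    ∃ F G : H → H, IsSplitting Ω f I J F G ∧
      ∀ q ∈ Ω ∩ Slice I, fc q = star (F (star q)) - G q * J

/-- `fs` is the symmetrization `f^s = f * f^c` of `f`. -/
def IsSymmetrization (Ω : Set H) (f fs : H → H) : Prop :=
  ∃ fc : H → H, IsRegularConj Ω f fc ∧ IsRegularProduct Ω f fc fs

/-- The degenerate set of `f`: union of the spheres `x + y𝕊` (`y ≠ 0`)
contained in `Ω` on which `f` is constant. -/
def DegSet (Ω : Set H) (f : H → H) : Set H :=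
  {q : H | ∃ x y : ℝ, y ≠ 0 ∧ q ∈ sphSet x y ∧ sphSet x y ⊆ Ω ∧
    ∀ p ∈ sphSet x y, ∀ p' ∈ sphSet x y, f p = f p'}


open Quaternion Complex

-- basic facts about Sph
lemma sph_re {I : H} (hI : I ∈ Sph) : I.re = 0 := by
  have h := hI
  simp only [Sph, Set.mem_setOf_eq, sq] at h
  have h1 : (I * I).re = (-1 : H).re := by rw [h]
  have h2 : (I * I).imI = (-1 : H).imI := by rw [h]
  have h3 : (I * I).imJ = (-1 : H).imJ := by rw [h]
  have h4 : (I * I).imK = (-1 : H).imK := by rw [h]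
  simp [Quaternion.re_mul, Quaternion.imI_mul, Quaternion.imJ_mul, Quaternion.imK_mul] at h1 h2 h3 h4
  by_contra hre
  have hiI : I.imI = 0 := by
    have hh : I.re * I.imI = 0 := by linarith
    rcases mul_eq_zero.mp hh with h'|h'
    · exact absurd h' hre
    · exact h'
  have hiJ : I.imJ = 0 := by
    have hh : I.re * I.imJ = 0 := by linarith
    rcases mul_eq_zero.mp hh with h'|h'
    · exact absurd h' hre
    · exact h'
  have hiK : I.imK = 0 := by
    have hh : I.re * I.imK = 0 := by linarith
    rcases mul_eq_zero.mp hh with h'|h'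
    · exact absurd h' hre
    · exact h'
  rw [hiI, hiJ, hiK] at h1
  nlinarith

lemma sph_normSq {I : H} (hI : I ∈ Sph) : normSq I = 1 := by
  have h := hI
  simp only [Sph, Set.mem_setOf_eq, sq] at h
  have h1 : (I * I).re = (-1 : H).re := by rw [h]
  simp [Quaternion.re_mul] at h1
  have hre := sph_re hI
  simp [Quaternion.normSq_def', hre]
  nlinarith

lemma sph_norm {I : H} (hI : I ∈ Sph) : ‖I‖ = 1 := by
  have := Quaternion.normSq_eq_norm_mul_self I
  rw [sph_normSq hI] at this
  nlinarith [norm_nonneg I]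

lemma sph_star {I : H} (hI : I ∈ Sph) : star I = -I := by
  ext <;> simp [sph_re hI]

lemma sph_neg {I : H} (hI : I ∈ Sph) : -I ∈ Sph := by
  simp only [Sph, Set.mem_setOf_eq] at hI ⊢
  rw [neg_pow]; simp [hI]

lemma sph_mul_self {I : H} (hI : I ∈ Sph) : I * I = -1 := by
  have h := hI; simp only [Sph, Set.mem_setOf_eq, sq] at h; exact h

def qI : H := ⟨0,1,0,0⟩
def qJ : H := ⟨0,0,1,0⟩

lemma qI_mem : qI ∈ Sph := by
  simp only [Sph, Set.mem_setOf_eq, sq]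
  ext <;> simp [Quaternion.re_mul, Quaternion.imI_mul, Quaternion.imJ_mul, Quaternion.imK_mul] <;> simp [qI]

lemma unitIm_mem {q : H} (hq : q.im ≠ 0) : (‖q.im‖⁻¹ • q.im) ∈ Sph := by
  have hn : ‖q.im‖ ≠ 0 := norm_ne_zero_iff.mpr hq
  simp only [Sph, Set.mem_setOf_eq]
  rw [smul_pow, Quaternion.im_sq]
  have : Quaternion.normSq q.im = ‖q.im‖ * ‖q.im‖ := Quaternion.normSq_eq_norm_mul_self _
  rw [this]
  have hval : (‖q.im‖⁻¹ : ℝ) ^ 2 * (‖q.im‖ * ‖q.im‖) = 1 := by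
    field_simp
  calc (‖q.im‖⁻¹ : ℝ) ^ 2 • (-(((‖q.im‖ * ‖q.im‖ : ℝ)) : H))
      = ((-((‖q.im‖⁻¹ : ℝ) ^ 2 * (‖q.im‖ * ‖q.im‖)) : ℝ) : H) := by
        push_cast
        rw [← Quaternion.coe_mul_eq_smul]
        push_cast
        rw [mul_neg]
    _ = -1 := by rw [hval]; push_cast; ring

-- the slice embedding
def phi (I : H) (z : ℂ) : H := ((z.re : ℝ) : H) + z.im • I

lemma phi_re (I : H) (r : ℝ) : phi I (r : ℂ) = (r : H) := by
  simp [phi]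

lemma normSq_phi {I : H} (hI : I ∈ Sph) (z : ℂ) : normSq (phi I z) = Complex.normSq z := by
  have h0 := sph_re hI
  have h1 := sph_normSq hI
  simp [Quaternion.normSq_def', h0] at h1
  simp [phi, Quaternion.normSq_def', h0, Complex.normSq_apply]
  linear_combination (z.im ^ 2) * h1

lemma norm_phi {I : H} (hI : I ∈ Sph) (z : ℂ) : ‖phi I z‖ = ‖z‖ := by
  have h := normSq_phi hI z
  have h2 := Quaternion.normSq_eq_norm_mul_self (phi I z)
  have h3 : Complex.normSq z = ‖z‖ * ‖z‖ := (Complex.normSq_eq_norm_sq z).trans (by rw [sq])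
  nlinarith [norm_nonneg (phi I z), norm_nonneg z]

lemma phi_injective {I : H} (hI : I ∈ Sph) : Function.Injective (phi I) := by
  intro z w h
  have : normSq (phi I (z - w)) = 0 := by
    have : phi I z - phi I w = phi I (z-w) := by
      simp [phi, Complex.sub_re, Complex.sub_im, sub_smul]
      push_cast
      abel
    rw [← this, h]; simp
  rw [normSq_phi hI] at this
  have := Complex.normSq_eq_zero.mp this
  exact sub_eq_zero.mp this

lemma phi_add (I : H) (z w : ℂ) : phi I (z + w) = phi I z + phi I w := by
  simp only [phi, Complex.add_re, Complex.add_im, add_smul]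
  push_cast
  abel

lemma phi_real_smul (I : H) (r : ℝ) (z : ℂ) : phi I (r • z) = r • phi I z := by
  simp only [phi, Complex.smul_re, Complex.smul_im, smul_add, smul_smul]
  simp [smul_eq_mul, Quaternion.coe_mul_eq_smul]

lemma phi_mul {I : H} (hI : I ∈ Sph) (z w : ℂ) : phi I (z * w) = phi I z * phi I w := by
  have h0 := sph_re hI
  have h := sph_mul_self hI
  have h1 : I.imI * I.imI + I.imJ * I.imJ + I.imK * I.imK = 1 := by
    have : (I * I).re = (-1 : H).re := by rw [h]
    simp [Quaternion.re_mul, h0] at this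
    linarith
  ext <;>
    simp [phi, Quaternion.re_mul, Quaternion.imI_mul, Quaternion.imJ_mul, Quaternion.imK_mul,
      h0, Complex.mul_re, Complex.mul_im]
  · linear_combination (z.im * w.im) * h1
  · ring
  · ring
  · ring

def sliceHom (I : H) (hI : I ∈ Sph) : ℂ →+* H where
  toFun := phi I
  map_one' := by simp [phi]
  map_mul' := phi_mul hI
  map_zero' := by simp [phi]
  map_add' := phi_add I

def sliceModule (I : H) (hI : I ∈ Sph) : Module ℂ H := Module.compHom H (sliceHom I hI)

lemma sliceModule_smul_def (I : H) (hI : I ∈ Sph) (c : ℂ) (q : H) :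
    (letI := sliceModule I hI; c • q) = phi I c * q := rfl

def sliceNS (I : H) (hI : I ∈ Sph) : @NormedSpace ℂ H _ _ := by
  letI := sliceModule I hI
  refine ⟨fun c q => ?_⟩
  show ‖phi I c * q‖ ≤ ‖c‖ * ‖q‖
  rw [norm_mul, norm_phi hI]

lemma sliceTower (I : H) (hI : I ∈ Sph) :
    (letI := sliceModule I hI; IsScalarTower ℝ ℂ H) := by
  letI := sliceModule I hI
  exact ⟨fun r c q => by
    show phi I (r • c) * q = r • (phi I c * q)
    rw [phi_real_smul, smul_mul_assoc]⟩

-- mk2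
def mk2 {E : Type*} [NormedAddCommGroup E] [NormedSpace ℝ E] (a b : E) : ℂ →L[ℝ] E :=
  Complex.reCLM.smulRight a + Complex.imCLM.smulRight b

@[simp] lemma mk2_apply {E : Type*} [NormedAddCommGroup E] [NormedSpace ℝ E] (a b : E) (z : ℂ) :
    mk2 a b z = z.re • a + z.im • b := rfl

lemma clm_eq_mk2 {E : Type*} [NormedAddCommGroup E] [NormedSpace ℝ E] (L : ℂ →L[ℝ] E) :
    L = mk2 (L 1) (L Complex.I) := by
  ext z
  rw [mk2_apply, ← map_smul, ← map_smul, ← map_add]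
  congr 1
  apply Complex.ext <;> simp

theorem crDiffAt {E : Type*} [NormedAddCommGroup E] [NormedSpace ℝ E] [NormedSpace ℂ E]
    [IsScalarTower ℝ ℂ E] {w : ℂ → E} {z : ℂ} {a : E}
    (h : HasFDerivAt w (mk2 a (Complex.I • a)) z) : DifferentiableAt ℂ w z := by
  set M : ℂ →L[ℂ] E := (ContinuousLinearMap.id ℂ ℂ).smulRight a with hM
  have key : M.restrictScalars ℝ = mk2 a (Complex.I • a) := by
    ext v
    show v • a = v.re • a + v.im • Complex.I • a
    conv_lhs => rw [← Complex.re_add_im v]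
    rw [add_smul]
    congr 1
    · exact algebraMap_smul ℂ v.re a
    · rw [← Complex.real_smul, smul_assoc]
  have : HasFDerivAt w M z := hasFDerivAt_of_restrictScalars ℝ h key
  exact this.differentiableAt

-- Lemma A: identity principle
theorem lemA {E : Type*} [NormedAddCommGroup E] [NormedSpace ℝ E] [NormedSpace ℂ E]
    [IsScalarTower ℝ ℂ E] [CompleteSpace E]
    {U : Set ℂ} (hUo : IsOpen U) (hUc : IsPreconnected U) {w : ℂ → E}
    (hCR : ∀ z ∈ U, ∃ a : E, HasFDerivAt w (mk2 a (Complex.I • a)) z)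
    {r₀ δ : ℝ} (hδ : 0 < δ) (hr₀ : ((r₀ : ℝ) : ℂ) ∈ U)
    (hvan : ∀ t : ℝ, |t - r₀| < δ → ((t : ℝ) : ℂ) ∈ U → w t = 0) :
    ∀ z ∈ U, w z = 0 := by
  have hdiff : DifferentiableOn ℂ w U := fun z hz => by
    obtain ⟨a, ha⟩ := hCR z hz
    exact (crDiffAt ha).differentiableWithinAt
  have han : AnalyticOnNhd ℂ w U := hdiff.analyticOnNhd hUo
  obtain ⟨ε, hε, hball⟩ := Metric.isOpen_iff.mp hUo _ hr₀
  have freq : ∃ᶠ z in nhdsWithin ((r₀ : ℝ) : ℂ) {((r₀ : ℝ) : ℂ)}ᶜ, w z = 0 := by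
    rw [Filter.frequently_iff]
    intro V hV
    rw [mem_nhdsWithin] at hV
    obtain ⟨t, hto, htm, hts⟩ := hV
    obtain ⟨ρ, hρ, hballt⟩ := Metric.isOpen_iff.mp hto _ htm
    set m := min (min ρ ε) δ with hm
    have hm0 : 0 < m := by positivity
    set s := r₀ + m / 2 with hs
    have habs : |s - r₀| = m / 2 := by
      rw [hs]
      have : r₀ + m / 2 - r₀ = m / 2 := by ring
      rw [this, abs_of_pos (by linarith)]
    have hdist : dist ((s : ℝ) : ℂ) ((r₀ : ℝ) : ℂ) = m / 2 := by
      rw [Complex.dist_eq, ← Complex.ofReal_sub, Complex.norm_real, Real.norm_eq_abs, habs]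
    have hsU : ((s : ℝ) : ℂ) ∈ U := hball (by rw [Metric.mem_ball, hdist]; calc m / 2 < m := by linarith
                                                                                   _ ≤ ε := le_trans (min_le_left _ _) (min_le_right _ _))
    have hsne : ((s : ℝ) : ℂ) ≠ ((r₀ : ℝ) : ℂ) := by
      intro hcon
      rw [hcon] at hdist
      simp at hdist
      linarith
    refine ⟨((s : ℝ) : ℂ), hts ⟨hballt ?_, hsne⟩, ?_⟩
    · rw [Metric.mem_ball, hdist]
      calc m / 2 < m := by linarith
        _ ≤ ρ := le_trans (min_le_left _ _) (min_le_left _ _)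
    · exact hvan s (by rw [habs]; calc m / 2 < m := by linarith
                                         _ ≤ δ := min_le_right _ _) hsU
  exact fun z hz =>
    han.eqOn_zero_of_preconnected_of_frequently_eq_zero hUc hr₀ freq hz

-- Lemma B: isolated zeros
theorem lemB {E : Type*} [NormedAddCommGroup E] [NormedSpace ℝ E] [NormedSpace ℂ E]
    [IsScalarTower ℝ ℂ E] [CompleteSpace E]
    {U : Set ℂ} (hUo : IsOpen U) {w : ℂ → E}
    (hCR : ∀ z ∈ U, ∃ a : E, HasFDerivAt w (mk2 a (Complex.I • a)) z)
    {z₀ : ℂ} (hz₀ : z₀ ∈ U) :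
    (∀ᶠ z in nhds z₀, w z = 0) ∨ ∃ ε > (0:ℝ), ∀ z, dist z z₀ < ε → w z = 0 → z = z₀ := by
  have hdiff : DifferentiableOn ℂ w U := fun z hz => by
    obtain ⟨a, ha⟩ := hCR z hz
    exact (crDiffAt ha).differentiableWithinAt
  have han : AnalyticAt ℂ w z₀ := hdiff.analyticOnNhd hUo z₀ hz₀
  rcases han.eventually_eq_zero_or_eventually_ne_zero with h | h
  · exact Or.inl h
  · right
    rw [Filter.eventually_iff, mem_nhdsWithin] at h
    obtain ⟨t, hto, htm, hts⟩ := h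
    obtain ⟨ρ, hρ, hballt⟩ := Metric.isOpen_iff.mp hto _ htm
    refine ⟨ρ, hρ, fun z hz hwz => ?_⟩
    by_contra hne
    exact hts ⟨hballt (Metric.mem_ball.mpr hz), hne⟩ hwz

-- ============ real part3 ============
set_option synthInstance.maxHeartbeats 1000000
set_option maxHeartbeats 1000000

lemma phi_cont (I : H) : Continuous (phi I) :=
  ((Quaternion.continuous_coe).comp Complex.continuous_re).add
    (Complex.continuous_im.smul continuous_const)

lemma phi_I_eq (I : H) : phi I Complex.I = I := by
  simp [phi]

def phiL (I : H) : ℂ →ₗ[ℝ] H where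
  toFun := phi I
  map_add' := phi_add I
  map_smul' := phi_real_smul I

lemma phi_embedding {I : H} (hI : I ∈ Sph) : Topology.IsInducing (phi I) := by
  have h : Function.Injective (phiL I) := phi_injective hI
  exact (LinearMap.isClosedEmbedding_of_injective (LinearMap.ker_eq_bot.mpr h)).toIsInducing

-- mk2 algebra
lemma mk2_add {E : Type*} [NormedAddCommGroup E] [NormedSpace ℝ E] (a b c d : E) :
    mk2 a b + mk2 c d = mk2 (a + c) (b + d) := by
  ext v
  simp [mk2_apply, smul_add]
  abel

lemma mk2_sub {E : Type*} [NormedAddCommGroup E] [NormedSpace ℝ E] (a b c d : E) :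
    mk2 a b - mk2 c d = mk2 (a - c) (b - d) := by
  ext v
  simp [mk2_apply, smul_sub]
  abel

lemma mk2_rsmul {E : Type*} [NormedAddCommGroup E] [NormedSpace ℝ E] (r : ℝ) (a b : E) :
    r • mk2 a b = mk2 (r • a) (r • b) := by
  ext v
  simp [mk2_apply, smul_smul, mul_comm]

lemma mk2_hsmul (c : H) (a b : H) : c • mk2 a b = mk2 (c * a) (c * b) := by
  refine ContinuousLinearMap.ext fun v => ?_
  simp only [ContinuousLinearMap.smul_apply, mk2_apply, smul_eq_mul, mul_add, mul_smul_comm]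

lemma mk2_comp_clm {E F : Type*} [NormedAddCommGroup E] [NormedSpace ℝ E]
    [NormedAddCommGroup F] [NormedSpace ℝ F] (L : E →L[ℝ] F) (a b : E) :
    L.comp (mk2 a b) = mk2 (L a) (L b) := by
  ext v
  simp [mk2_apply]

lemma hasFDeriv_conj_comp {E : Type*} [NormedAddCommGroup E] [NormedSpace ℝ E]
    {g : ℂ → E} {z : ℂ} {a b : E}
    (h : HasFDerivAt g (mk2 a b) ((starRingEnd ℂ) z)) :
    HasFDerivAt (fun z => g ((starRingEnd ℂ) z)) (mk2 a (-b)) z := by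
  have hc : HasFDerivAt (fun z : ℂ => (starRingEnd ℂ) z)
      (Complex.conjCLE.toContinuousLinearEquiv.toContinuousLinearMap) z := by
    exact Complex.conjCLE.hasFDerivAt
  have h2 := h.comp z hc
  refine h2.congr_fderiv ?_
  ext v
  simp [mk2_apply, smul_neg]

-- splitting projections
def piF : H →ₗ[ℝ] ℂ where
  toFun q := ⟨q.re, q.imI⟩
  map_add' a b := by simp [Complex.ext_iff]
  map_smul' r a := by simp [Complex.ext_iff, Complex.smul_re, Complex.smul_im, smul_eq_mul]

def piG : H →ₗ[ℝ] ℂ where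
  toFun q := ⟨q.imJ, q.imK⟩
  map_add' a b := by simp [Complex.ext_iff]
  map_smul' r a := by simp [Complex.ext_iff, Complex.smul_re, Complex.smul_im, smul_eq_mul]

def piFc : H →L[ℝ] ℂ := LinearMap.toContinuousLinearMap piF
def piGc : H →L[ℝ] ℂ := LinearMap.toContinuousLinearMap piG

@[simp] lemma piFc_apply (q : H) : piFc q = ⟨q.re, q.imI⟩ := rfl
@[simp] lemma piGc_apply (q : H) : piGc q = ⟨q.imJ, q.imK⟩ := rfl

lemma piF_qI_mul (u : H) : piFc (qI * u) = Complex.I * piFc u := by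
  simp [Complex.ext_iff, Quaternion.re_mul, Quaternion.imI_mul, Complex.mul_re, Complex.mul_im] <;> simp [qI]

lemma piG_qI_mul (u : H) : piGc (qI * u) = Complex.I * piGc u := by
  simp [Complex.ext_iff, Quaternion.imJ_mul, Quaternion.imK_mul, Complex.mul_re, Complex.mul_im] <;> simp [qI]

-- conj-conj differentiability for ℂ → ℂ
lemma diff_conj_conj {F : ℂ → ℂ} {z : ℂ} (h : DifferentiableAt ℂ F ((starRingEnd ℂ) z)) :
    DifferentiableAt ℂ (fun w => (starRingEnd ℂ) (F ((starRingEnd ℂ) w))) z := by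
  obtain ⟨c, hc⟩ : ∃ c, HasDerivAt F c ((starRingEnd ℂ) z) := ⟨_, h.hasDerivAt⟩
  have h1 : HasFDerivAt F (ContinuousLinearMap.smulRight (1 : ℂ →L[ℂ] ℂ) c) ((starRingEnd ℂ) z) :=
    hc.hasFDerivAt
  have h1r := h1.restrictScalars ℝ
  have hcj : ∀ x : ℂ, HasFDerivAt (fun z : ℂ => (starRingEnd ℂ) z)
      (Complex.conjCLE.toContinuousLinearEquiv.toContinuousLinearMap) x := fun x =>
    Complex.conjCLE.hasFDerivAt
  have h2 := ((hcj (F ((starRingEnd ℂ) z))).comp z ((h1r).comp z (hcj z)))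
  have key : (Complex.conjCLE.toContinuousLinearEquiv.toContinuousLinearMap.comp
      (((ContinuousLinearMap.smulRight (1 : ℂ →L[ℂ] ℂ) c).restrictScalars ℝ).comp
        Complex.conjCLE.toContinuousLinearEquiv.toContinuousLinearMap))
      = (ContinuousLinearMap.smulRight (1 : ℂ →L[ℂ] ℂ) ((starRingEnd ℂ) c)).restrictScalars ℝ := by
    ext v
    simp [mul_comm]
  rw [key] at h2
  exact (hasFDerivAt_of_restrictScalars ℝ h2 rfl).differentiableAt

-- ===== part 4 =====

lemma sliceH_deriv {Ω : Set H} {f : H → H} (hf : SliceRegular Ω f) {I : H} (hI : I ∈ Sph)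
    {z : ℂ} (hz : phi I z ∈ Ω) :
    ∃ u : H, HasFDerivAt (fun z => f (phi I z)) (mk2 u (I * u)) z := by
  obtain ⟨hdiff, hCR⟩ := hf I hI z.re z.im hz
  set G : ℝ × ℝ → H := fun p : ℝ × ℝ => f ((p.1 : H) + p.2 • I) with hG
  set L := fderiv ℝ G (z.re, z.im) with hL
  have hGd : HasFDerivAt G L (z.re, z.im) := hdiff.hasFDerivAt
  have he : HasFDerivAt (fun z : ℂ => ((z.re, z.im) : ℝ × ℝ))
      (Complex.equivRealProdCLM.toContinuousLinearEquiv.toContinuousLinearMap) z :=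
    Complex.equivRealProdCLM.hasFDerivAt
  have hcomp := hGd.comp z he
  refine ⟨L (1, 0), ?_⟩
  have hv : L (0, 1) = I * L (1, 0) := by
    have h2 : I * (L (1, 0) + I * L (0, 1)) = 0 := by rw [hCR, mul_zero]
    rw [mul_add, ← mul_assoc, sph_mul_self hI, neg_one_mul] at h2
    have h3 : I * L (1, 0) - L (0, 1) = 0 := by rw [sub_eq_add_neg]; exact h2
    exact (sub_eq_zero.mp h3).symm
  have hkey : L.comp (Complex.equivRealProdCLM.toContinuousLinearEquiv.toContinuousLinearMap)
      = mk2 (L (1, 0)) (I * L (1, 0)) := by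
    rw [← hv]
    refine ContinuousLinearMap.ext fun v => ?_
    have hvdec : ((v.re, v.im) : ℝ × ℝ) = v.re • ((1 : ℝ), (0 : ℝ)) + v.im • ((0 : ℝ), (1 : ℝ)) := by
      simp
    simp only [ContinuousLinearMap.coe_comp', Function.comp_apply, mk2_apply]
    show L (v.re, v.im) = _
    rw [hvdec, map_add, map_smul, map_smul]
  rw [hkey] at hcomp
  exact hcomp

-- key algebraic identity
def cF (q : H) : ℂ := ⟨q.re, q.imI⟩
def cG (q : H) : ℂ := ⟨q.imJ, q.imK⟩

lemma split_eq (q : H) : phi qI (cF q) + phi qI (cG q) * qJ = q := by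
  ext <;> simp [phi, cF, cG, Quaternion.re_mul, Quaternion.imI_mul, Quaternion.imJ_mul,
    Quaternion.imK_mul] <;> simp [qI, qJ]

lemma keyalg (p q : H) :
    phi qI (cF p * (starRingEnd ℂ) (cF q) + cG p * (starRingEnd ℂ) (cG q)) =
      (((2⁻¹ : ℝ) • (p + q)) * star ((2⁻¹ : ℝ) • (p + q))
        - ((2⁻¹ : ℝ) • (qI * (q - p))) * star ((2⁻¹ : ℝ) • (qI * (q - p))))
      + qI * (((2⁻¹ : ℝ) • (p + q)) * star ((2⁻¹ : ℝ) • (qI * (q - p)))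
        + ((2⁻¹ : ℝ) • (qI * (q - p))) * star ((2⁻¹ : ℝ) • (p + q))) := by
  ext <;>
    simp [phi, cF, cG, Quaternion.re_mul, Quaternion.imI_mul, Quaternion.imJ_mul,
      Quaternion.imK_mul, Complex.mul_re, Complex.mul_im, Quaternion.re_star,
      Quaternion.imI_star, Quaternion.imJ_star, Quaternion.imK_star] <;> simp [qI] <;>
    ring

-- ===== part 5: coordinates and metric =====

def coordz (q : H) : ℂ := ⟨q.re, ‖q.im‖⟩

lemma coord_repr (q : H) : ∃ J ∈ Sph, phi J (coordz q) = q := by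
  by_cases hq : q.im = 0
  · refine ⟨qI, qI_mem, ?_⟩
    have h1 := Quaternion.re_add_im q
    rw [hq, add_zero] at h1
    show ((q.re : ℝ) : H) + ‖q.im‖ • qI = q
    rw [hq]
    simp [h1]
  · refine ⟨‖q.im‖⁻¹ • q.im, unitIm_mem hq, ?_⟩
    have hn : ‖q.im‖ ≠ 0 := norm_ne_zero_iff.mpr hq
    show ((q.re : ℝ) : H) + ‖q.im‖ • (‖q.im‖⁻¹ • q.im) = q
    rw [smul_smul, mul_inv_cancel₀ hn, one_smul, Quaternion.re_add_im]

lemma norm_sq_decomp (x : H) : ‖x‖ ^ 2 = x.re ^ 2 + ‖x.im‖ ^ 2 := by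
  have h1 : ‖x‖ ^ 2 = normSq x := by
    rw [sq, ← Quaternion.normSq_eq_norm_mul_self]
  have h2 : ‖x.im‖ ^ 2 = normSq x.im := by
    rw [sq, ← Quaternion.normSq_eq_norm_mul_self]
  rw [h1, h2, Quaternion.normSq_def', Quaternion.normSq_def']
  simp
  ring

lemma im_sub (p q : H) : (p - q).im = p.im - q.im := by
  ext <;> simp

lemma dist_coordz_le (p q : H) : dist (coordz p) (coordz q) ≤ ‖p - q‖ := by
  rw [Complex.dist_eq]
  have h1 : ((coordz p - coordz q).re) = p.re - q.re := rfl
  have h2 : ((coordz p - coordz q).im) = ‖p.im‖ - ‖q.im‖ := rfl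
  have habs : ‖coordz p - coordz q‖
      = Real.sqrt ((p.re - q.re) ^ 2 + (‖p.im‖ - ‖q.im‖) ^ 2) := by
    rw [Complex.norm_def, Complex.normSq_apply, h1, h2]
    ring_nf
  rw [habs]
  have hnorm : ‖p - q‖ = Real.sqrt ((p.re - q.re) ^ 2 + ‖p.im - q.im‖ ^ 2) := by
    have := norm_sq_decomp (p - q)
    rw [im_sub] at this
    have hsub : (p - q).re = p.re - q.re := by simp
    rw [hsub] at this
    rw [← this, Real.sqrt_sq (norm_nonneg _)]
  rw [hnorm]
  apply Real.sqrt_le_sqrt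
  have h3 : |‖p.im‖ - ‖q.im‖| ≤ ‖p.im - q.im‖ := abs_norm_sub_norm_le _ _
  have h4 : (‖p.im‖ - ‖q.im‖) ^ 2 ≤ ‖p.im - q.im‖ ^ 2 := by
    nlinarith [h3, _root_.sq_abs (‖p.im‖ - ‖q.im‖), abs_nonneg (‖p.im‖ - ‖q.im‖),
      norm_nonneg (p.im - q.im)]
  linarith

lemma coordz_of_sphere {x y : ℝ} (hy : 0 < y) {K : H} (hK : K ∈ Sph) :
    coordz ((x : H) + y • K) = ⟨x, y⟩ := by
  have hre : ((x : H) + y • K).re = x := by simp [sph_re hK]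
  have him : ((x : H) + y • K).im = y • K := by
    ext <;> simp [sph_re hK]
  rw [coordz, hre, him, norm_smul, sph_norm hK]
  simp [abs_of_pos hy]

lemma mem_sphere_of_coords {q : H} {x y : ℝ} (hy : y ≠ 0) (hre : q.re = x) (him : ‖q.im‖ = y) :
    ∃ K ∈ Sph, q = (x : H) + y • K := by
  have hqim : q.im ≠ 0 := by
    intro h
    rw [h] at him
    simp at him
    exact hy him.symm
  refine ⟨‖q.im‖⁻¹ • q.im, unitIm_mem hqim, ?_⟩
  rw [← hre, ← him, smul_smul, mul_inv_cancel₀ (norm_ne_zero_iff.mpr hqim), one_smul,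
    Quaternion.re_add_im]


/-- Structure of the Zero Set: each zero of a not identically
vanishing slice regular `f` is either isolated in the zero set, or lies on a
sphere `x + y𝕊` (`y ≠ 0`) of zeros which is isolated in the zero set. -/
theorem structure_of_zero_set (Ω : Set H) (hΩ : IsSymmSliceDomain Ω)
    (f : H → H) (hf : SliceRegular Ω f) (hne : ¬ ∀ q ∈ Ω, f q = 0) :
    ∀ q₀ ∈ Ω, f q₀ = 0 →
      (∃ ε > (0 : ℝ), ∀ q ∈ Ω, f q = 0 → ‖q - q₀‖ < ε → q = q₀) ∨
      (∃ x y : ℝ, y ≠ 0 ∧ q₀ ∈ sphSet x y ∧ (∀ q ∈ sphSet x y, f q = 0) ∧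
        ∃ ε > (0 : ℝ), ∀ q ∈ Ω, f q = 0 →
          (∃ p ∈ sphSet x y, ‖q - p‖ < ε) → q ∈ sphSet x y) := by
  classical
  obtain ⟨⟨hΩo, hΩc, hRpt, hslices⟩, hax⟩ := hΩ
  obtain ⟨rpt, hrptΩ, r₁, hr₁⟩ := hRpt
  rw [hr₁] at hrptΩ
  intro q₀ hq₀Ω hq₀z
  set U : Set ℂ := (phi qI) ⁻¹' Ω with hUdef
  have hUo : IsOpen U := hΩo.preimage (phi_cont qI)
  have memU : ∀ {J : H}, J ∈ Sph → ∀ {z : ℂ}, phi J z ∈ Ω →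
      ∀ {J' : H}, J' ∈ Sph → phi J' z ∈ Ω := by
    intro J hJ z hz J' hJ'
    exact hax z.re z.im J hJ hz J' hJ'
  have hzU : ∀ {z : ℂ} {J : H}, J ∈ Sph → phi J z ∈ Ω → z ∈ U := by
    intro z J hJ hz
    exact memU hJ hz qI_mem
  have hUmem : ∀ {z : ℂ} {J : H}, J ∈ Sph → z ∈ U → phi J z ∈ Ω := by
    intro z J hJ hz
    exact memU qI_mem hz hJ
  have hUconj : ∀ {z : ℂ}, z ∈ U → (starRingEnd ℂ) z ∈ U := by
    intro z hz
    have h1 : phi (-qI) z ∈ Ω := memU qI_mem hz (sph_neg qI_mem)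
    have h2 : phi qI ((starRingEnd ℂ) z) = phi (-qI) z := by
      simp [phi, smul_neg]
    show phi qI _ ∈ Ω
    rw [h2]; exact h1
  have hr₁U : ((r₁ : ℝ) : ℂ) ∈ U := by
    show phi qI _ ∈ Ω
    rw [phi_re]; exact hrptΩ
  have hUconn : IsPreconnected U := by
    have himg : phi qI '' U = Ω ∩ Slice qI := by
      ext q
      constructor
      · rintro ⟨z, hzU', rfl⟩
        exact ⟨hzU', z.re, z.im, rfl⟩
      · rintro ⟨hq, x, y, rfl⟩
        exact ⟨⟨x, y⟩, hq, rfl⟩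
    have := (hslices qI qI_mem).isPreconnected
    rw [← himg] at this
    exact (phi_embedding qI_mem).isPreconnected_image.mp this
  set g : ℂ → H := fun z => f (phi qI z) with hgdef
  have hDg : ∀ {J : H}, J ∈ Sph → ∀ {z : ℂ}, z ∈ U →
      ∃ u, HasFDerivAt (fun z => f (phi J z)) (mk2 u (J * u)) z := by
    intro J hJ z hz
    exact sliceH_deriv hf hJ (hUmem hJ hz)
  -- M1 : a real point where f does not vanish
  have hreal : ∃ r₀ : ℝ, ((r₀ : ℝ) : ℂ) ∈ U ∧ f ((r₀ : ℝ) : H) ≠ 0 := by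
    by_contra hcon
    push_neg at hcon
    apply hne
    intro q hq
    obtain ⟨Jq, hJq, hrepr⟩ := coord_repr q
    have hcz : coordz q ∈ U := hzU hJq (by rw [hrepr]; exact hq)
    letI := sliceModule Jq hJq
    letI := sliceNS Jq hJq
    haveI : IsScalarTower ℝ ℂ H := sliceTower Jq hJq
    have hsmul : ∀ a : H, (Complex.I • a : H) = Jq * a := by
      intro a
      show phi Jq Complex.I * a = Jq * a
      rw [phi_I_eq]
    have hvanish := lemA (E := H) hUo hUconn (w := fun z => f (phi Jq z))
      (fun z hz => by
        obtain ⟨u, hu⟩ := hDg hJq hz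
        exact ⟨u, hu.congr_fderiv (congrArg (mk2 u) (hsmul u)).symm⟩)
      (δ := 1) one_pos hr₁U
      (fun t _ htU => by
        show f (phi Jq ((t : ℝ) : ℂ)) = 0
        rw [phi_re]
        exact hcon t htU)
    rw [← hrepr]
    exact hvanish _ hcz
  obtain ⟨r₀, hr₀U, hfr₀⟩ := hreal
  -- representation formula
  set al : ℂ → H := fun z => (2⁻¹ : ℝ) • (g z + g ((starRingEnd ℂ) z)) with haldef
  set be : ℂ → H := fun z => (2⁻¹ : ℝ) • (qI * (g ((starRingEnd ℂ) z) - g z)) with hbedef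
  have hhalf : ∀ x : H, (2⁻¹ : ℝ) • (x + x) = x := by
    intro x
    rw [← two_smul ℝ x, smul_smul]
    norm_num
  have hrep : ∀ {J : H}, J ∈ Sph → ∀ {z : ℂ}, z ∈ U → f (phi J z) = al z + J * be z := by
    intro J hJ z₀ hz₀
    letI := sliceModule J hJ
    letI := sliceNS J hJ
    haveI : IsScalarTower ℝ ℂ H := sliceTower J hJ
    have hsmul : ∀ a : H, (Complex.I • a : H) = J * a := by
      intro a
      show phi J Complex.I * a = J * a
      rw [phi_I_eq]
    set w : ℂ → H := fun z => f (phi J z) - (al z + J * be z) with hwdef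
    have hCR : ∀ z ∈ U, ∃ a : H, HasFDerivAt w (mk2 a (Complex.I • a)) z := by
      intro z hz
      obtain ⟨v, hv⟩ := hDg hJ hz
      obtain ⟨u, hu⟩ := hDg qI_mem hz
      obtain ⟨u', hu'⟩ := hDg qI_mem (hUconj hz)
      have hc : HasFDerivAt (fun z => g ((starRingEnd ℂ) z)) (mk2 u' (-(qI * u'))) z :=
        hasFDeriv_conj_comp hu'
      have hα : HasFDerivAt al ((2⁻¹ : ℝ) • (mk2 u (qI * u) + mk2 u' (-(qI * u')))) z :=
        (hu.fun_add hc).fun_const_smul _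
      rw [mk2_add, mk2_rsmul] at hα
      have hβ0 : HasFDerivAt (fun z => g ((starRingEnd ℂ) z) - g z)
          (mk2 u' (-(qI * u')) - mk2 u (qI * u)) z := hc.sub hu
      rw [mk2_sub] at hβ0
      have hβ1 := hβ0.const_mul qI
      rw [mk2_hsmul] at hβ1
      have hβ : HasFDerivAt be
          ((2⁻¹ : ℝ) • mk2 (qI * (u' - u)) (qI * (-(qI * u') - qI * u))) z :=
        hβ1.fun_const_smul _
      rw [mk2_rsmul] at hβ
      have hJβ := hβ.const_mul J
      rw [mk2_hsmul] at hJβ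
      have hsum := hα.add hJβ
      rw [mk2_add] at hsum
      have hfinal := hv.sub hsum
      rw [mk2_sub] at hfinal
      refine ⟨v - ((2⁻¹ : ℝ) • (u + u') + J * ((2⁻¹ : ℝ) • (qI * (u' - u)))), ?_⟩
      have hqq : ∀ x : H, qI * (qI * x) = -x := fun x => by
        rw [← mul_assoc, sph_mul_self qI_mem, neg_one_mul]
      have hJJ : ∀ x : H, J * (J * x) = -x := fun x => by
        rw [← mul_assoc, sph_mul_self hJ, neg_one_mul]
      have halg : Complex.I • (v - ((2⁻¹ : ℝ) • (u + u') + J * ((2⁻¹ : ℝ) • (qI * (u' - u)))))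
          = J * v - ((2⁻¹ : ℝ) • (qI * u + -(qI * u'))
              + J * ((2⁻¹ : ℝ) • (qI * (-(qI * u') - qI * u)))) := by
        rw [hsmul]
        simp only [mul_sub, mul_add, smul_sub, smul_add, mul_smul_comm, hqq, hJJ,
          mul_neg, neg_neg, smul_neg, sub_neg_eq_add]
        abel
      rw [halg]
      exact hfinal
    have hvanW := lemA (E := H) hUo hUconn hCR (δ := 1) one_pos hr₁U
      (fun t _ htU => by
        show f (phi J ((t : ℝ) : ℂ)) - (al ((t : ℝ) : ℂ) + J * be ((t : ℝ) : ℂ)) = 0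
        have h1 : al ((t : ℝ) : ℂ) = f ((t : ℝ) : H) := by
          rw [haldef]
          simp only [Complex.conj_ofReal]
          show (2⁻¹ : ℝ) • (f (phi qI ((t : ℝ) : ℂ)) + f (phi qI ((t : ℝ) : ℂ))) = _
          rw [phi_re, hhalf]
        have h2 : be ((t : ℝ) : ℂ) = 0 := by
          rw [hbedef]
          simp only [Complex.conj_ofReal]
          show (2⁻¹ : ℝ) • (qI * (f (phi qI ((t : ℝ) : ℂ)) - f (phi qI ((t : ℝ) : ℂ)))) = 0
          rw [sub_self, mul_zero, smul_zero]
        rw [phi_re, h1, h2, mul_zero, add_zero, sub_self])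
    have := hvanW z₀ hz₀
    exact sub_eq_zero.mp this
  -- the detector function h
  set Fc : ℂ → ℂ := fun z => cF (g z) with hFcdef
  set Gc : ℂ → ℂ := fun z => cG (g z) with hGcdef
  set hfun : ℂ → ℂ := fun z =>
    Fc z * (starRingEnd ℂ) (Fc ((starRingEnd ℂ) z))
      + Gc z * (starRingEnd ℂ) (Gc ((starRingEnd ℂ) z)) with hhdef
  have hFcDiff : ∀ {z : ℂ}, z ∈ U → DifferentiableAt ℂ Fc z := by
    intro z hz
    obtain ⟨u, hu⟩ := hDg qI_mem hz
    have h1 : HasFDerivAt Fc (piFc.comp (mk2 u (qI * u))) z := piFc.hasFDerivAt.comp z hu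
    rw [mk2_comp_clm, piF_qI_mul] at h1
    exact crDiffAt (by rwa [smul_eq_mul])
  have hGcDiff : ∀ {z : ℂ}, z ∈ U → DifferentiableAt ℂ Gc z := by
    intro z hz
    obtain ⟨u, hu⟩ := hDg qI_mem hz
    have h1 : HasFDerivAt Gc (piGc.comp (mk2 u (qI * u))) z := piGc.hasFDerivAt.comp z hu
    rw [mk2_comp_clm, piG_qI_mul] at h1
    exact crDiffAt (by rwa [smul_eq_mul])
  have hanh : AnalyticOnNhd ℂ hfun U := by
    apply DifferentiableOn.analyticOnNhd _ hUo
    intro z hz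
    have h1 := hFcDiff hz
    have h2 := hGcDiff hz
    have h3 := diff_conj_conj (F := Fc) (hFcDiff (hUconj hz))
    have h4 := diff_conj_conj (F := Gc) (hGcDiff (hUconj hz))
    exact ((h1.mul h3).add (h2.mul h4)).differentiableWithinAt
  have hr₀ne : hfun ((r₀ : ℝ) : ℂ) ≠ 0 := by
    intro hcon
    apply hfr₀
    rw [hhdef] at hcon
    simp only [Complex.conj_ofReal] at hcon
    rw [Complex.mul_conj, Complex.mul_conj, ← Complex.ofReal_add] at hcon
    have hsum : Complex.normSq (Fc ((r₀ : ℝ) : ℂ)) + Complex.normSq (Gc ((r₀ : ℝ) : ℂ)) = 0 := by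
      exact_mod_cast hcon
    have hn1 := Complex.normSq_nonneg (Fc ((r₀ : ℝ) : ℂ))
    have hn2 := Complex.normSq_nonneg (Gc ((r₀ : ℝ) : ℂ))
    have hF0 : Fc ((r₀ : ℝ) : ℂ) = 0 := by
      apply Complex.normSq_eq_zero.mp
      linarith
    have hG0 : Gc ((r₀ : ℝ) : ℂ) = 0 := by
      apply Complex.normSq_eq_zero.mp
      linarith
    have hsplit := split_eq (g ((r₀ : ℝ) : ℂ))
    rw [(show cF (g ((r₀ : ℝ) : ℂ)) = Fc ((r₀ : ℝ) : ℂ) from rfl),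
      (show cG (g ((r₀ : ℝ) : ℂ)) = Gc ((r₀ : ℝ) : ℂ) from rfl), hF0, hG0] at hsplit
    simp only [phi, Complex.zero_re, Complex.zero_im] at hsplit
    have hg0 : g ((r₀ : ℝ) : ℂ) = 0 := by
      rw [← hsplit]; simp
    have h9 : g ((r₀ : ℝ) : ℂ) = f ((r₀ : ℝ) : H) := by
      show f (phi qI ((r₀ : ℝ) : ℂ)) = f ((r₀ : ℝ) : H)
      rw [phi_re]
    rw [← h9]
    exact hg0
  -- zeros of f force zeros of hfun
  have hzero_h : ∀ {z : ℂ} {J : H}, z ∈ U → J ∈ Sph → f (phi J z) = 0 → hfun z = 0 := by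
    intro z J hz hJ hzf
    have h0 : al z + J * be z = 0 := by rw [← hrep hJ hz]; exact hzf
    have hA : al z = -(J * be z) := by
      have := eq_neg_of_add_eq_zero_left h0
      exact this
    have hf1 : al z * star (al z) - be z * star (be z) = 0 := by
      rw [hA, Quaternion.self_mul_star, Quaternion.self_mul_star]
      have h2 : normSq (-(J * be z)) = normSq (be z) := by
        rw [Quaternion.normSq_neg, map_mul, sph_normSq hJ, one_mul]
      rw [h2, sub_self]
    have hf2 : al z * star (be z) + be z * star (al z) = 0 := by
      have e1 : al z * star (be z) = -(J * ((normSq (be z) : ℝ) : H)) := by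
        rw [hA, neg_mul, mul_assoc, Quaternion.self_mul_star]
      have e2 : be z * star (al z) = ((normSq (be z) : ℝ) : H) * J := by
        rw [hA, star_neg, star_mul, sph_star hJ]
        simp only [mul_neg, neg_neg]
        rw [← mul_assoc, Quaternion.self_mul_star]
      rw [e1, e2, Quaternion.coe_commutes]
      exact neg_add_cancel _
    have hk := keyalg (g z) (g ((starRingEnd ℂ) z))
    rw [(show ((2⁻¹ : ℝ) • (g z + g ((starRingEnd ℂ) z))) = al z from rfl),
      (show ((2⁻¹ : ℝ) • (qI * (g ((starRingEnd ℂ) z) - g z))) = be z from rfl)] at hk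
    have hphi0 : phi qI (hfun z) = 0 := by
      rw [(show phi qI (hfun z) = phi qI (cF (g z) * (starRingEnd ℂ) (cF (g ((starRingEnd ℂ) z)))
          + cG (g z) * (starRingEnd ℂ) (cG (g ((starRingEnd ℂ) z)))) from rfl), hk, hf1, hf2,
        mul_zero, add_zero]
    apply phi_injective qI_mem
    rw [hphi0]
    simp [phi]
  -- endgame
  obtain ⟨J₀, hJ₀, hrepr₀⟩ := coord_repr q₀
  set z₀ : ℂ := coordz q₀ with hz₀def
  have hz₀U : z₀ ∈ U := hzU hJ₀ (by rw [hrepr₀]; exact hq₀Ω)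
  have hh0 : hfun z₀ = 0 := hzero_h hz₀U hJ₀ (by rw [hrepr₀]; exact hq₀z)
  have hnotloc : ¬ (∀ᶠ z in nhds z₀, hfun z = 0) := by
    intro hev
    have freq : ∃ᶠ z in nhdsWithin z₀ {z₀}ᶜ, hfun z = 0 :=
      (hev.filter_mono nhdsWithin_le_nhds).frequently
    have := hanh.eqOn_zero_of_preconnected_of_frequently_eq_zero hUconn hz₀U freq hr₀U
    exact hr₀ne this
  obtain ⟨ε, hε, hiso⟩ : ∃ ε > (0 : ℝ), ∀ z, dist z z₀ < ε → hfun z = 0 → z = z₀ := by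
    rcases (hanh z₀ hz₀U).eventually_eq_zero_or_eventually_ne_zero with h | h
    · exact absurd h hnotloc
    · rw [Filter.eventually_iff, mem_nhdsWithin] at h
      obtain ⟨t, hto, htm, hts⟩ := h
      obtain ⟨ρ, hρ, hballt⟩ := Metric.isOpen_iff.mp hto _ htm
      refine ⟨ρ, hρ, fun z hz hwz => ?_⟩
      by_contra hne'
      exact hts ⟨hballt (Metric.mem_ball.mpr hz), hne'⟩ hwz
  have hcoord : ∀ q ∈ Ω, f q = 0 → dist (coordz q) z₀ < ε → coordz q = z₀ := by
    intro q hqΩ hqz hdist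
    obtain ⟨Jq, hJq, hreprq⟩ := coord_repr q
    have hqU : coordz q ∈ U := hzU hJq (by rw [hreprq]; exact hqΩ)
    exact hiso _ hdist (hzero_h hqU hJq (by rw [hreprq]; exact hqz))
  by_cases him : q₀.im = 0
  · left
    refine ⟨ε, hε, fun q hqΩ hqz hqd => ?_⟩
    have hcz := hcoord q hqΩ hqz (lt_of_le_of_lt (dist_coordz_le q q₀) hqd)
    have hre : q.re = q₀.re := congrArg Complex.re hcz
    have himq : ‖q.im‖ = ‖q₀.im‖ := congrArg Complex.im hcz
    rw [him, norm_zero] at himq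
    have himq0 : q.im = 0 := norm_eq_zero.mp himq
    have h1 := Quaternion.re_add_im q
    have h2 := Quaternion.re_add_im q₀
    rw [himq0, add_zero] at h1
    rw [him, add_zero] at h2
    rw [← h1, ← h2, hre]
  · set y₀ : ℝ := ‖q₀.im‖ with hy₀def
    have hy₀ : y₀ ≠ 0 := norm_ne_zero_iff.mpr him
    have hy₀pos : 0 < y₀ := norm_pos_iff.mpr him
    have hq₀mem : q₀ ∈ sphSet q₀.re y₀ := by
      obtain ⟨K, hK, hKe⟩ := mem_sphere_of_coords hy₀ rfl rfl
      exact ⟨K, hK, hKe⟩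
    have hz₀eq : z₀ = ⟨q₀.re, y₀⟩ := rfl
    have hmem_of : ∀ q : H, coordz q = z₀ → q ∈ sphSet q₀.re y₀ := by
      intro q hcz
      have hre : q.re = q₀.re := congrArg Complex.re hcz
      have himq : ‖q.im‖ = y₀ := congrArg Complex.im hcz
      obtain ⟨K, hK, hKe⟩ := mem_sphere_of_coords hy₀ hre himq
      exact ⟨K, hK, hKe⟩
    by_cases hsphz : ∀ p ∈ sphSet q₀.re y₀, f p = 0
    · right
      refine ⟨q₀.re, y₀, hy₀, hq₀mem, hsphz, ε, hε, ?_⟩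
      rintro q hqΩ hqz ⟨p, hp, hqp⟩
      obtain ⟨K, hK, hpe⟩ := hp
      have hczp : coordz p = z₀ := by
        rw [hpe, coordz_of_sphere hy₀pos hK, hz₀eq]
      have hd : dist (coordz q) z₀ < ε := by
        rw [← hczp]
        exact lt_of_le_of_lt (dist_coordz_le q p) hqp
      exact hmem_of q (hcoord q hqΩ hqz hd)
    · left
      push_neg at hsphz
      obtain ⟨p₁, hp₁mem, hp₁ne⟩ := hsphz
      refine ⟨ε, hε, fun q hqΩ hqz hqd => ?_⟩
      have hcz := hcoord q hqΩ hqz (lt_of_le_of_lt (dist_coordz_le q q₀) hqd)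
      have hqmem := hmem_of q hcz
      by_contra hqne
      obtain ⟨K₁, hK₁, hK₁e⟩ := hqmem
      obtain ⟨K₂, hK₂, hK₂e⟩ := hq₀mem
      have hKne : K₁ ≠ K₂ := by
        intro hcon
        apply hqne
        rw [hK₁e, hcon, ← hK₂e]
      have hrepK : ∀ K : H, K ∈ Sph → f ((q₀.re : H) + y₀ • K) = al z₀ + K * be z₀ := by
        intro K hK
        have h := hrep hK hz₀U
        rw [(show phi K z₀ = (q₀.re : H) + y₀ • K from rfl)] at h
        exact h
      have he₁ : al z₀ + K₁ * be z₀ = 0 := by rw [← hrepK K₁ hK₁, ← hK₁e]; exact hqz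
      have he₂ : al z₀ + K₂ * be z₀ = 0 := by rw [← hrepK K₂ hK₂, ← hK₂e]; exact hq₀z
      have hbe0 : be z₀ = 0 := by
        have hsub : (K₁ - K₂) * be z₀ = 0 := by
          rw [sub_mul]
          have h3 : K₁ * be z₀ - K₂ * be z₀
              = (al z₀ + K₁ * be z₀) - (al z₀ + K₂ * be z₀) := by abel
          rw [h3, he₁, he₂, sub_zero]
        rcases mul_eq_zero.mp hsub with h | h
        · exact absurd h (sub_ne_zero.mpr hKne)
        · exact h
      have hal0 : al z₀ = 0 := by
        rw [hbe0, mul_zero, add_zero] at he₁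
        exact he₁
      apply hp₁ne
      obtain ⟨K₃, hK₃, hK₃e⟩ := hp₁mem
      rw [hK₃e, hrepK K₃ hK₃, hal0, hbe0, mul_zero, add_zero]
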